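/- Let A = ℚ[x₁,...,x_n]/(f₁,...,f_n) as above, identified with B ⊗ F where B = ℚ[y₀]/(y₀^{2k}) and F = ⊗ᵢ ℚ[x_i]/(x_i^{a_i}). Let N = V ⊗ F where V = span{y₀^s : 0 ≤ s < k}. Then dim_ℚ A = 2·dim_ℚ N, and N·N = 0 under the Poincaré duality inner product (equivalently, the product of any two elements of N has zero component in the top degree of A). -/

import Mathlib

set_option synthInstance.maxHeartbeats 1000000
set_option maxHeartbeats 1000000

open MvPolynomial

namespace Stmt11

variable {n : ℕ}

def mval (a : Fin n → ℕ) (α : Fin n →₀ ℕ) : ℕ := ∑ j, α j / a j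

noncomputable def red (a : Fin n → ℕ) (lst : Fin n) (α : Fin n →₀ ℕ) : Fin n →₀ ℕ :=
  Finsupp.equivFunOnFinite.symm fun j =>
    if j = lst then mval a α * a lst + α lst % a lst else α j % a j

lemma red_apply (a : Fin n → ℕ) (lst : Fin n) (α : Fin n →₀ ℕ) (j : Fin n) :
    red a lst α j = if j = lst then mval a α * a lst + α lst % a lst else α j % a j := rfl

noncomputable def NF (k : ℕ) (a : Fin n → ℕ) (lst : Fin n) :
    MvPolynomial (Fin n) ℚ →ₗ[ℚ] MvPolynomial (Fin n) ℚ :=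
  (Finsupp.lsum ℚ fun α =>
    if mval a α < 2 * k then
      (monomial (red a lst α) : ℚ →ₗ[ℚ] MvPolynomial (Fin n) ℚ) else 0) ∘ₗ
    (AddMonoidAlgebra.coeffLinearEquiv ℚ).toLinearMap

theorem NF_monomial (k : ℕ) (a : Fin n → ℕ) (lst : Fin n) (α : Fin n →₀ ℕ) (c : ℚ) :
    NF k a lst (monomial α c) =
      if mval a α < 2 * k then monomial (red a lst α) c else 0 := by
  rw [NF, LinearMap.comp_apply]
  show Finsupp.lsum ℚ _ (Finsupp.single α c) = _
  rw [Finsupp.lsum_single]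
  split <;> simp

lemma wsum_add_single (a g : Fin n → ℕ) (j : Fin n) (h : 0 < a j) (γ : Fin n →₀ ℕ) :
    ∑ i, g i * ((γ + Finsupp.single j (a j)) i / a i) = (∑ i, g i * (γ i / a i)) + g j := by
  have key : ∀ i, g i * ((γ + Finsupp.single j (a j)) i / a i)
      = g i * (γ i / a i) + if i = j then g j else 0 := by
    intro i
    rcases eq_or_ne i j with rfl | hij
    · simp [Nat.add_div_right _ h, Nat.mul_add]
    · simp [Finsupp.single_apply, Ne.symm hij, hij]
  rw [Finset.sum_congr rfl fun i _ => key i, Finset.sum_add_distrib]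
  simp

lemma mod_add_single (a : Fin n → ℕ) (γ : Fin n →₀ ℕ) (j i : Fin n) :
    (γ + Finsupp.single j (a j)) i % a i = γ i % a i := by
  rcases eq_or_ne i j with rfl | h
  · simp [Nat.add_mod_right]
  · simp [Finsupp.single_apply, Ne.symm h]

lemma mval_add_single (a : Fin n → ℕ) (j : Fin n) (h : 0 < a j) (γ : Fin n →₀ ℕ) :
    mval a (γ + Finsupp.single j (a j)) = mval a γ + 1 := by
  have := wsum_add_single a (fun _ => 1) j h γ
  simpa [mval] using this

lemma red_congr (a : Fin n → ℕ) (lst : Fin n) {α β : Fin n →₀ ℕ}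
    (hm : mval a α = mval a β) (hr : ∀ i, α i % a i = β i % a i) :
    red a lst α = red a lst β := by
  unfold red
  congr 1
  funext i
  simp only [hm, hr]


theorem NF_mul_f (k : ℕ) (a : Fin n → ℕ) (ha : ∀ i, 0 < a i) (lst : Fin n)
    (f : Fin n → MvPolynomial (Fin n) ℚ)
    (hf : ∀ i : Fin n, f i =
      if h : (i : ℕ) + 1 < n then
        X i ^ a i - X (⟨(i : ℕ) + 1, h⟩ : Fin n) ^ a (⟨(i : ℕ) + 1, h⟩ : Fin n)
      else
        X i ^ (2 * k * a i))
    (i : Fin n) (p : MvPolynomial (Fin n) ℚ) :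
    NF k a lst (p * f i) = 0 := by
  induction p using MvPolynomial.induction_on' with
  | add p q hp hq => rw [add_mul, map_add, hp, hq, add_zero]
  | monomial α c =>
    rw [hf i]
    split_ifs with h
    · set i' : Fin n := ⟨(i : ℕ) + 1, h⟩ with hi'
      have e1 : (monomial α c : MvPolynomial (Fin n) ℚ) * (X i ^ a i - X i' ^ a i')
          = monomial (α + Finsupp.single i (a i)) c
            - monomial (α + Finsupp.single i' (a i')) c := by
        rw [mul_sub, X_pow_eq_monomial, X_pow_eq_monomial, monomial_mul, monomial_mul,
          mul_one c]
      rw [e1, map_sub, NF_monomial, NF_monomial]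
      have hm1 := mval_add_single a i (ha i) α
      have hm2 := mval_add_single a i' (ha i') α
      have hred : red a lst (α + Finsupp.single i (a i))
          = red a lst (α + Finsupp.single i' (a i')) := by
        apply red_congr a lst (by rw [hm1, hm2])
        intro t
        rw [mod_add_single, mod_add_single]
      rw [hm1, hm2, hred]
      split <;> simp
    · have e1 : (monomial α c : MvPolynomial (Fin n) ℚ) * X i ^ (2 * k * a i)
          = monomial (α + Finsupp.single i (2 * k * a i)) c := by
        rw [X_pow_eq_monomial, monomial_mul, mul_one]

      rw [e1, NF_monomial, if_neg]
      push_neg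
      have h1 : 2 * k ≤ (α + Finsupp.single i (2 * k * a i)) i / a i := by
        rw [Nat.le_div_iff_mul_le (ha i)]
        simp [Nat.mul_comm]
      calc 2 * k ≤ (α + Finsupp.single i (2 * k * a i)) i / a i := h1
        _ ≤ _ := Finset.single_le_sum (f := fun t => (α + Finsupp.single i (2 * k * a i)) t / a t) (fun t _ => Nat.zero_le _) (Finset.mem_univ i)

theorem NF_eq_zero_of_mem (k : ℕ) (a : Fin n → ℕ) (ha : ∀ i, 0 < a i) (lst : Fin n)
    (f : Fin n → MvPolynomial (Fin n) ℚ)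
    (hf : ∀ i : Fin n, f i =
      if h : (i : ℕ) + 1 < n then
        X i ^ a i - X (⟨(i : ℕ) + 1, h⟩ : Fin n) ^ a (⟨(i : ℕ) + 1, h⟩ : Fin n)
      else
        X i ^ (2 * k * a i))
    {p : MvPolynomial (Fin n) ℚ} (hp : p ∈ Ideal.span (Set.range f)) :
    NF k a lst p = 0 := by
  obtain ⟨c, rfl⟩ := (Submodule.mem_span_range_iff_exists_fun _).1 hp
  rw [map_sum]
  exact Finset.sum_eq_zero fun i _ => NF_mul_f k a ha lst f hf i (c i)

noncomputable def expE (a : Fin n → ℕ) (lst : Fin n) (s : ℕ) (c : Fin n → ℕ) : Fin n →₀ ℕ :=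
  Finsupp.equivFunOnFinite.symm fun i => if i = lst then s * a lst + c lst else c i

lemma expE_apply (a : Fin n → ℕ) (lst : Fin n) (s : ℕ) (c : Fin n → ℕ) (i : Fin n) :
    expE a lst s c i = if i = lst then s * a lst + c lst else c i := rfl

lemma monomial_expE (a : Fin n → ℕ) (lst : Fin n) (s : ℕ) (c : Fin n → ℕ) :
    (X lst ^ (s * a lst) * ∏ i, X i ^ (c i) : MvPolynomial (Fin n) ℚ)
      = monomial (expE a lst s c) 1 := by
  have h1 : (∏ i : Fin n, (X i ^ (c i) : MvPolynomial (Fin n) ℚ))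
      = monomial (Finsupp.equivFunOnFinite.symm c) 1 := by
    rw [← prod_X_pow_eq_monomial]
    refine (Finset.prod_subset (Finset.subset_univ _) fun x _ hx => ?_).symm
    have : (Finsupp.equivFunOnFinite.symm c) x = 0 := Finsupp.notMem_support_iff.1 hx
    have hc : c x = 0 := this
    simp [hc]
  have h2 : Finsupp.single lst (s * a lst) + Finsupp.equivFunOnFinite.symm c
      = expE a lst s c := by
    ext i
    rcases eq_or_ne i lst with rfl | hi
    · simp [expE_apply, Finsupp.single_apply]
    · simp [expE_apply, Finsupp.single_apply, hi, Ne.symm hi]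
  rw [h1, X_pow_eq_monomial, monomial_mul, one_mul, h2]

lemma mval_expE (a : Fin n → ℕ) (ha : ∀ i, 0 < a i) (lst : Fin n) (s : ℕ) (c : Fin n → ℕ)
    (hc : ∀ i, c i < a i) : mval a (expE a lst s c) = s := by
  unfold mval
  rw [Finset.sum_eq_single lst]
  · rw [expE_apply, if_pos rfl, Nat.add_comm, Nat.add_mul_div_right _ _ (ha lst),
      Nat.div_eq_of_lt (hc lst), Nat.zero_add]
  · intro i _ hi
    rw [expE_apply, if_neg hi, Nat.div_eq_of_lt (hc i)]
  · intro h; exact absurd (Finset.mem_univ lst) h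

lemma red_expE (a : Fin n → ℕ) (ha : ∀ i, 0 < a i) (lst : Fin n) (s : ℕ) (c : Fin n → ℕ)
    (hc : ∀ i, c i < a i) : red a lst (expE a lst s c) = expE a lst s c := by
  ext i
  rw [red_apply, mval_expE a ha lst s c hc]
  rcases eq_or_ne i lst with rfl | hi
  · simp only [expE_apply, if_true, eq_self_iff_true]
    rw [Nat.mul_add_mod', Nat.mod_eq_of_lt (hc _)]
  · simp only [expE_apply, if_neg hi]
    rw [Nat.mod_eq_of_lt (hc i)]

lemma mulAdd_inj {A s t x y : ℕ} (hx : x < A) (hy : y < A)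
    (h : s * A + x = t * A + y) : s = t ∧ x = y := by
  have key : ∀ {s t x y : ℕ}, x < A → y < A → s * A + x = t * A + y → s ≤ t := by
    intro s t x y hx hy h
    by_contra hlt
    push_neg at hlt
    have h2 : (t + 1) * A ≤ s * A := Nat.mul_le_mul_right A hlt
    rw [Nat.succ_mul] at h2
    omega
  have hst := le_antisymm (key hx hy h) (key hy hx h.symm)
  subst hst
  omega
theorem mk_monomial_red (k : ℕ) (a : Fin n → ℕ) (ha : ∀ i, 0 < a i) (lst : Fin n)
    (hlst : (lst : ℕ) = n - 1) (f : Fin n → MvPolynomial (Fin n) ℚ)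
    (hf : ∀ i : Fin n, f i =
      if h : (i : ℕ) + 1 < n then
        X i ^ a i - X (⟨(i : ℕ) + 1, h⟩ : Fin n) ^ a (⟨(i : ℕ) + 1, h⟩ : Fin n)
      else
        X i ^ (2 * k * a i))
    (α : Fin n →₀ ℕ) :
    Ideal.Quotient.mk (Ideal.span (Set.range f)) (monomial α 1) =
      if mval a α < 2 * k then
        Ideal.Quotient.mk (Ideal.span (Set.range f)) (monomial (red a lst α) 1) else 0 := by
  set I := Ideal.span (Set.range f) with hI
  -- base case: when the reduction measure is zero
  have base : ∀ α : Fin n →₀ ℕ, (∑ j : Fin n, ((n - 1) - (j : ℕ)) * (α j / a j)) = 0 →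
      Ideal.Quotient.mk I (monomial α 1) =
        if mval a α < 2 * k then Ideal.Quotient.mk I (monomial (red a lst α) 1) else 0 := by
    intro α h0
    have hq0 : ∀ i : Fin n, i ≠ lst → α i / a i = 0 := by
      intro i hi
      have hterm := (Finset.sum_eq_zero_iff.1 h0) i (Finset.mem_univ i)
      have hipos : 0 < ((n - 1) - (i : ℕ)) := by
        have h1 : (i : ℕ) < n := i.isLt
        have h2 : (i : ℕ) ≠ n - 1 := fun h => hi (Fin.ext (by rw [h, hlst]))
        omega
      rcases Nat.mul_eq_zero.1 hterm with h | h
      · omega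
      · exact h
    have hm : mval a α = α lst / a lst := by
      unfold mval
      rw [Finset.sum_eq_single lst (fun i _ hi => hq0 i hi)
        (fun h => absurd (Finset.mem_univ lst) h)]
    by_cases hcase : mval a α < 2 * k
    · have hredeq : red a lst α = α := by
        ext i
        rw [red_apply]
        rcases eq_or_ne i lst with rfl | hi
        · rw [if_pos rfl, hm, Nat.div_add_mod']
        · rw [if_neg hi]
          have hdm := Nat.div_add_mod (α i) (a i)
          rw [hq0 i hi] at hdm
          omega
      rw [if_pos hcase, hredeq]
    · rw [if_neg hcase]
      push_neg at hcase
      rw [hm] at hcase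
      have hge : 2 * k * a lst ≤ α lst := by
        rw [← Nat.le_div_iff_mul_le (ha lst)]; exact hcase
      set γ := α - Finsupp.single lst (2 * k * a lst) with hγ
      have hαγ : α = γ + Finsupp.single lst (2 * k * a lst) := by
        ext i
        rcases eq_or_ne i lst with rfl | hi
        · simp only [hγ, Finsupp.add_apply, Finsupp.tsub_apply, Finsupp.single_eq_same]
          omega
        · simp [hγ, Finsupp.single_apply, Ne.symm hi]
      have hnot : ¬ ((lst : ℕ) + 1 < n) := by
        have := lst.isLt; omega
      have hmono : monomial α (1 : ℚ) = monomial γ 1 * f lst := by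
        rw [hf lst, dif_neg hnot, X_pow_eq_monomial, monomial_mul, mul_one, ← hαγ]
      have hflst : Ideal.Quotient.mk I (f lst) = 0 :=
        Ideal.Quotient.eq_zero_iff_mem.2 (Ideal.subset_span (Set.mem_range_self lst))
      rw [hmono, map_mul, hflst, mul_zero]
  -- inductive step over the measure
  suffices H : ∀ (M : ℕ) (α : Fin n →₀ ℕ), (∑ j : Fin n, ((n - 1) - (j : ℕ)) * (α j / a j)) ≤ M →
      Ideal.Quotient.mk I (monomial α 1) =
        if mval a α < 2 * k then Ideal.Quotient.mk I (monomial (red a lst α) 1) else 0 by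
    exact H _ α le_rfl
  intro M
  induction M with
  | zero => intro α hα; exact base α (by omega)
  | succ M ih =>
    intro α hα
    by_cases h0 : (∑ j : Fin n, ((n - 1) - (j : ℕ)) * (α j / a j)) = 0
    · exact base α h0
    · obtain ⟨j, -, hj⟩ := Finset.exists_ne_zero_of_sum_ne_zero h0
      have hjlt' : (j : ℕ) < n - 1 := by
        rcases Nat.eq_zero_or_pos ((n - 1) - (j : ℕ)) with h | h
        · rw [h] at hj; omega
        · omega
      have hjlst : j ≠ lst := fun h => by rw [h, hlst] at hjlt'; omega
      have hjlt : (j : ℕ) + 1 < n := by have := j.isLt; omega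
      have hja : a j ≤ α j := by
        have hqj : α j / a j ≠ 0 := by
          intro h; rw [h, Nat.mul_zero] at hj; exact hj rfl
        exact (Nat.one_le_div_iff (ha j)).1 (Nat.one_le_iff_ne_zero.2 hqj)
      set j' : Fin n := ⟨(j : ℕ) + 1, hjlt⟩ with hj'
      set γ := α - Finsupp.single j (a j) with hγ
      have hαγ : α = γ + Finsupp.single j (a j) := by
        ext i
        rcases eq_or_ne i j with rfl | hi
        · simp only [hγ, Finsupp.add_apply, Finsupp.tsub_apply, Finsupp.single_eq_same]
          omega
        · simp [hγ, Finsupp.single_apply, Ne.symm hi]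
      set α' := γ + Finsupp.single j' (a j') with hα'
      have hmv : mval a α = mval a α' := by
        rw [hαγ, hα', mval_add_single a j (ha j) γ, mval_add_single a j' (ha j') γ]
      have hred : red a lst α = red a lst α' := by
        apply red_congr a lst hmv
        intro i
        rw [hαγ, hα', mod_add_single, mod_add_single]
      -- measure decreases
      have hμα : (∑ i : Fin n, ((n - 1) - (i : ℕ)) * (α i / a i))
          = (∑ i : Fin n, ((n - 1) - (i : ℕ)) * (γ i / a i)) + ((n - 1) - (j : ℕ)) := by
        rw [hαγ]; exact wsum_add_single a (fun i => (n - 1) - (i : ℕ)) j (ha j) γ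
      have hμα' : (∑ i : Fin n, ((n - 1) - (i : ℕ)) * (α' i / a i))
          = (∑ i : Fin n, ((n - 1) - (i : ℕ)) * (γ i / a i)) + ((n - 1) - ((j : ℕ) + 1)) := by
        rw [hα']; exact wsum_add_single a (fun i => (n - 1) - (i : ℕ)) j' (ha j') γ
      have hμ' : (∑ i : Fin n, ((n - 1) - (i : ℕ)) * (α' i / a i)) ≤ M := by omega
      -- the classes agree
      have hmk : Ideal.Quotient.mk I (monomial α (1 : ℚ))
          = Ideal.Quotient.mk I (monomial α' 1) := by
        have hsub : monomial α (1 : ℚ) - monomial α' 1 = monomial γ 1 * f j := by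
          rw [hf j, dif_pos hjlt, mul_sub, X_pow_eq_monomial, X_pow_eq_monomial,
            monomial_mul, monomial_mul, mul_one, ← hαγ, hα']
        have h2 : Ideal.Quotient.mk I (monomial α (1 : ℚ))
            - Ideal.Quotient.mk I (monomial α' 1) = 0 := by
          have hfj : Ideal.Quotient.mk I (f j) = 0 :=
            Ideal.Quotient.eq_zero_iff_mem.2 (Ideal.subset_span (Set.mem_range_self j))
          rw [← map_sub, hsub, map_mul, hfj, mul_zero]
        exact sub_eq_zero.1 h2
      rw [hmk, hmv, hred]
      exact ih α' hμ'
lemma mk_smul (I : Ideal (MvPolynomial (Fin n) ℚ)) (c : ℚ) (x : MvPolynomial (Fin n) ℚ) :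
    Ideal.Quotient.mk I (c • x) = c • Ideal.Quotient.mk I x := by
  rw [← Ideal.Quotient.mkₐ_eq_mk ℚ I]
  exact map_smul (Ideal.Quotient.mkₐ ℚ I) c x

end Stmt11

open Stmt11 in
theorem stmt_11 (n k d : ℕ) (hn : 2 ≤ n) (hk : 1 ≤ k)
    (a w : Fin n → ℕ) (ha : ∀ i, 2 ≤ a i)
    (hw : ∀ i, 0 < w i) (hweven : ∀ i, Even (w i)) (hwd : ∀ i, w i * a i = d)
    (lst : Fin n) (hlst : (lst : ℕ) = n - 1)
    (f : Fin n → MvPolynomial (Fin n) ℚ)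
    (hf : ∀ i : Fin n, f i =
      if h : (i : ℕ) + 1 < n then
        X i ^ a i - X (⟨(i : ℕ) + 1, h⟩ : Fin n) ^ a (⟨(i : ℕ) + 1, h⟩ : Fin n)
      else
        X i ^ (2 * k * a i))
    (N : Submodule ℚ (MvPolynomial (Fin n) ℚ ⧸ Ideal.span (Set.range f)))
    (hN : N = Submodule.span ℚ
      (Set.range fun p : Fin k × (∀ i : Fin n, Fin (a i)) =>
        Ideal.Quotient.mk (Ideal.span (Set.range f))
          (X lst ^ ((p.1 : ℕ) * a lst) * ∏ i : Fin n, X i ^ (p.2 i : ℕ)))) :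
    Module.finrank ℚ (MvPolynomial (Fin n) ℚ ⧸ Ideal.span (Set.range f))
      = 2 * Module.finrank ℚ N
    ∧ ∀ u ∈ N, ∀ v ∈ N,
        u * v ∈ ⨆ (q : ℕ) (_ : q ≠ (n - 1) * d + 2 * k * d - ∑ i : Fin n, w i),
          Submodule.map (Ideal.Quotient.mkₐ ℚ (Ideal.span (Set.range f))).toLinearMap
            (weightedHomogeneousSubmodule ℚ w q) := by
  classical
  open Pointwise in
  subst hN
  have ha1 : ∀ i, 0 < a i := fun i => by have := ha i; omega
  set I := Ideal.span (Set.range f) with hI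
  set Eidx : (Fin (2 * k) × (∀ i : Fin n, Fin (a i))) → (Fin n →₀ ℕ) :=
    fun p => expE a lst (p.1 : ℕ) (fun i => (p.2 i : ℕ)) with hEidx
  set B : (Fin (2 * k) × (∀ i : Fin n, Fin (a i))) → (MvPolynomial (Fin n) ℚ ⧸ I) :=
    fun p => Ideal.Quotient.mk I (monomial (Eidx p) 1) with hB
  have hEinj : Function.Injective Eidx := by
    intro p q h
    have happ : ∀ i, Eidx p i = Eidx q i := fun i => by rw [h]
    have hlc := happ lst
    simp only [hEidx, expE_apply, if_pos rfl] at hlc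
    obtain ⟨h1, h2⟩ := mulAdd_inj (p.2 lst).isLt (q.2 lst).isLt hlc
    have hp2 : p.2 = q.2 := by
      funext i
      apply Fin.ext
      rcases eq_or_ne i lst with rfl | hi
      · exact h2
      · have h3 := happ i
        simpa [hEidx, expE_apply, hi] using h3
    exact Prod.ext (Fin.ext h1) hp2
  have hmvalE : ∀ p, mval a (Eidx p) = (p.1 : ℕ) :=
    fun p => mval_expE a ha1 lst _ _ (fun i => (p.2 i).isLt)
  have hredE : ∀ p, red a lst (Eidx p) = Eidx p :=
    fun p => red_expE a ha1 lst _ _ (fun i => (p.2 i).isLt)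
  -- linear independence of the big family
  have hBli : LinearIndependent ℚ B := by
    rw [Fintype.linearIndependent_iff]
    intro g hg
    have hP : Ideal.Quotient.mk I (∑ p, g p • monomial (Eidx p) 1) = 0 := by
      rw [map_sum, Finset.sum_congr rfl fun p _ => mk_smul I (g p) _]
      exact hg
    have hmem : (∑ p, g p • monomial (Eidx p) 1) ∈ I := Ideal.Quotient.eq_zero_iff_mem.1 hP
    have hNF := NF_eq_zero_of_mem k a ha1 lst f hf hmem
    rw [map_sum] at hNF
    have hterm : ∀ p, NF k a lst (g p • monomial (Eidx p) 1) = g p • monomial (Eidx p) 1 := by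
      intro p
      rw [map_smul, NF_monomial, if_pos (by rw [hmvalE p]; exact (p.1).isLt), hredE p]
    rw [Finset.sum_congr rfl fun p _ => hterm p] at hNF
    have hmon : LinearIndependent ℚ
        fun p : Fin (2 * k) × (∀ i : Fin n, Fin (a i)) =>
          (monomial (Eidx p) (1 : ℚ) : MvPolynomial (Fin n) ℚ) := by
      have h4 := (basisMonomials (Fin n) ℚ).linearIndependent.comp Eidx hEinj
      simpa [Function.comp_def, coe_basisMonomials] using h4
    exact Fintype.linearIndependent_iff.1 hmon g hNF
  -- spanning
  have hBspan : ⊤ ≤ Submodule.span ℚ (Set.range B) := by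
    rintro x -
    obtain ⟨p, rfl⟩ := Ideal.Quotient.mk_surjective x
    induction p using MvPolynomial.induction_on' with
    | add p q hp hq => rw [map_add]; exact Submodule.add_mem _ hp hq
    | monomial α c =>
      have h1 : (monomial α c : MvPolynomial (Fin n) ℚ) = c • monomial α 1 := by
        rw [smul_monomial, smul_eq_mul, mul_one]
      rw [h1, mk_smul]
      apply Submodule.smul_mem
      rw [mk_monomial_red k a ha1 lst hlst f hf α]
      split_ifs with h
      · have h2 : red a lst α
            = Eidx ⟨⟨mval a α, h⟩, fun i => ⟨α i % a i, Nat.mod_lt _ (ha1 i)⟩⟩ := rfl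
        rw [h2]
        exact Submodule.subset_span (Set.mem_range_self _)
      · exact Submodule.zero_mem _
  let bA : Module.Basis _ ℚ (MvPolynomial (Fin n) ℚ ⧸ I) := Module.Basis.mk hBli hBspan
  have hrankA : Module.finrank ℚ (MvPolynomial (Fin n) ℚ ⧸ I) = 2 * k * ∏ i, a i := by
    rw [Module.finrank_eq_card_basis bA]
    simp [Fintype.card_pi]
  -- the small family
  have hkk : ∀ s : Fin k, (s : ℕ) < 2 * k := fun s => by have := s.isLt; omega
  set ι : (Fin k × (∀ i : Fin n, Fin (a i))) → (Fin (2 * k) × (∀ i : Fin n, Fin (a i))) :=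
    fun p => (⟨(p.1 : ℕ), hkk p.1⟩, p.2) with hι
  have hιinj : Function.Injective ι := by
    intro p q h
    have h1 : ((ι p).1 : ℕ) = ((ι q).1 : ℕ) := congrArg (fun z => (z.1 : ℕ)) h
    have h2 : (ι p).2 = (ι q).2 := congrArg Prod.snd h
    exact Prod.ext (Fin.ext h1) h2
  have hgenB : (fun p : Fin k × (∀ i : Fin n, Fin (a i)) =>
      Ideal.Quotient.mk I (X lst ^ ((p.1 : ℕ) * a lst) * ∏ i : Fin n, X i ^ (p.2 i : ℕ)))
      = B ∘ ι := by
    funext p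
    rw [Function.comp_apply, hB, monomial_expE]
  have hNli : LinearIndependent ℚ (B ∘ ι) := hBli.comp ι hιinj
  have hrankN : Module.finrank ℚ ↥(Submodule.span ℚ (Set.range (B ∘ ι))) = k * ∏ i, a i := by
    rw [finrank_span_eq_card hNli]
    simp [Fintype.card_pi]
  constructor
  · rw [hrankA, hgenB, hrankN]; ring
  · intro u hu v hv
    rw [hgenB] at hu hv
    have huv : u * v ∈ Submodule.span ℚ (Set.range (B ∘ ι) * Set.range (B ∘ ι)) := by
      rw [← Submodule.span_mul_span]
      exact Submodule.mul_mem_mul hu hv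
    refine Submodule.span_le.2 ?_ huv
    rintro x ⟨x1, hx1, x2, hx2, rfl⟩
    obtain ⟨p, rfl⟩ := hx1
    obtain ⟨p', rfl⟩ := hx2
    set β : Fin n →₀ ℕ := Eidx (ι p) + Eidx (ι p') with hβ
    have hprod : (B ∘ ι) p * (B ∘ ι) p'
        = Ideal.Quotient.mk I (monomial β 1) := by
      simp only [Function.comp_apply, hB, ← map_mul, monomial_mul, one_mul, hβ]
    show (B ∘ ι) p * (B ∘ ι) p' ∈ _
    rw [hprod]
    by_cases hq : (Finsupp.weight w) β = (n - 1) * d + 2 * k * d - ∑ i : Fin n, w i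
    · -- in this case the class is zero
      have hzero : Ideal.Quotient.mk I (monomial β (1 : ℚ)) = 0 := by
        rw [mk_monomial_red k a ha1 lst hlst f hf β, if_neg ?hh]
        case hh =>
          intro hlt2k
          have hd : 0 < d := by rw [← hwd lst]; exact Nat.mul_pos (hw lst) (ha1 lst)
          have hW : (Finsupp.weight w) β
              = (mval a β) * d + ∑ i : Fin n, (β i % a i) * w i := by
            rw [Finsupp.weight_apply, Finsupp.sum_fintype _ _ (fun i => by simp)]
            have hterm : ∀ i : Fin n, β i • w i
                = (β i / a i) * d + (β i % a i) * w i := by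
              intro i
              rw [smul_eq_mul, ← hwd i]
              conv_lhs => rw [← Nat.div_add_mod (β i) (a i)]
              ring
            rw [Finset.sum_congr rfl fun i _ => hterm i, Finset.sum_add_distrib]
            unfold mval
            rw [Finset.sum_mul]
          have hwled : ∀ i : Fin n, w i ≤ d := fun i => by
            rw [← hwd i]; exact Nat.le_mul_of_pos_right _ (ha1 i)
          have hawd : ∑ i : Fin n, a i * w i = n * d := by
            have h5 : ∀ i : Fin n, a i * w i = d := fun i => by
              rw [Nat.mul_comm]; exact hwd i
            rw [Finset.sum_congr rfl fun i _ => h5 i, Finset.sum_const, Finset.card_univ,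
              Fintype.card_fin, smul_eq_mul]
          have hwsum : ∑ i : Fin n, w i ≤ n * d := by
            calc ∑ i : Fin n, w i ≤ ∑ _i : Fin n, d := Finset.sum_le_sum fun i _ => hwled i
              _ = n * d := by
                rw [Finset.sum_const, Finset.card_univ, Fintype.card_fin, smul_eq_mul]
          have hnd : n * d = (n - 1) * d + d := by
            have h1 : n - 1 + 1 = n := by omega
            calc n * d = ((n - 1) + 1) * d := by rw [h1]
              _ = (n - 1) * d + d := by ring
          have h2kd : 2 * k * d = (2 * k - 1) * d + d := by
            have h1 : 2 * k - 1 + 1 = 2 * k := by omega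
            calc 2 * k * d = ((2 * k - 1) + 1) * d := by rw [h1]
              _ = (2 * k - 1) * d + d := by ring
          have hDsum : ((n - 1) * d + 2 * k * d - ∑ i : Fin n, w i) + ∑ i : Fin n, w i
              = (n - 1) * d + 2 * k * d := by omega
          have hsplit : ∑ i : Fin n, ((β i % a i) + 1) * w i
              = (∑ i : Fin n, (β i % a i) * w i) + ∑ i : Fin n, w i := by
            rw [← Finset.sum_add_distrib]
            exact Finset.sum_congr rfl fun i _ => by ring
          have hmain : (mval a β) * d + (∑ i : Fin n, ((β i % a i) + 1) * w i)
              = (n - 1) * d + 2 * k * d := by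
            rw [hW] at hq
            omega
          have hle1 : ∀ i : Fin n, ((β i % a i) + 1) * w i ≤ a i * w i := fun i =>
            Nat.mul_le_mul_right _ (Nat.mod_lt _ (ha1 i))
          have hub : ∑ i : Fin n, ((β i % a i) + 1) * w i ≤ n * d := by
            rw [← hawd]; exact Finset.sum_le_sum fun i _ => hle1 i
          have hmval_le : mval a β ≤ 2 * k - 1 := by omega
          have hmul_le : (mval a β) * d ≤ (2 * k - 1) * d := Nat.mul_le_mul_right _ hmval_le
          have heq2 : (∑ i : Fin n, ((β i % a i) + 1) * w i = n * d)
              ∧ (mval a β) * d = (2 * k - 1) * d := by constructor <;> omega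
          have hm2k : mval a β = 2 * k - 1 := Nat.eq_of_mul_eq_mul_right hd heq2.2
          have hsums : ∑ i : Fin n, ((β i % a i) + 1) * w i = ∑ i : Fin n, a i * w i := by
            rw [hawd]; exact heq2.1
          have hterm_eq : ∀ i : Fin n, ((β i % a i) + 1) * w i = a i * w i := fun i =>
            ((Finset.sum_eq_sum_iff_of_le fun i _ => hle1 i).1 hsums) i (Finset.mem_univ i)
          have hr1 : ∀ i : Fin n, (β i % a i) + 1 = a i := fun i =>
            Nat.eq_of_mul_eq_mul_right (hw i) (hterm_eq i)
          have hq0 : ∀ i : Fin n, i ≠ lst → β i / a i = 0 := by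
            intro i hi
            have hβi : β i = (p.2 i : ℕ) + (p'.2 i : ℕ) := by
              simp [hβ, Finsupp.add_apply, hEidx, hι, expE_apply, hi]
            have h1 : β i ≤ 2 * a i - 2 := by
              have := (p.2 i).isLt; have := (p'.2 i).isLt; omega
            have hdm := Nat.div_add_mod (β i) (a i)
            have hri := hr1 i
            by_contra hne
            have hq1 : 1 ≤ β i / a i := Nat.one_le_iff_ne_zero.2 hne
            have h3 : a i ≤ a i * (β i / a i) := Nat.le_mul_of_pos_right _ hq1
            omega
          have hmv_lst : mval a β = β lst / a lst :=
            Finset.sum_eq_single lst (fun i _ hi => hq0 i hi)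
              (fun h => absurd (Finset.mem_univ lst) h)
          have hblst : β lst
              = ((p.1 : ℕ) + (p'.1 : ℕ)) * a lst + ((p.2 lst : ℕ) + (p'.2 lst : ℕ)) := by
            simp only [hβ, Finsupp.add_apply, hEidx, hι, expE_apply, eq_self_iff_true, if_true]
            ring
          have hdm := Nat.div_add_mod (β lst) (a lst)
          rw [hmv_lst] at hm2k
          have hrl := hr1 lst
          have e3 : a lst * (2 * k - 1) + a lst = a lst * (2 * k) := by
            have h1 : 2 * k - 1 + 1 = 2 * k := by omega
            calc a lst * (2 * k - 1) + a lst = a lst * ((2 * k - 1) + 1) := by ring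
              _ = a lst * (2 * k) := by rw [h1]
          have e4 : a lst * (2 * k) = 2 * k * (a lst) := Nat.mul_comm _ _
          have hbound : ((p.1 : ℕ) + (p'.1 : ℕ) + 2) * a lst ≤ 2 * k * (a lst) := by
            apply Nat.mul_le_mul_right
            have := p.1.isLt; have := p'.1.isLt; omega
          have hexp : ((p.1 : ℕ) + (p'.1 : ℕ) + 2) * a lst
              = ((p.1 : ℕ) + (p'.1 : ℕ)) * a lst + 2 * a lst := by ring
          have hc1 : (p.2 lst : ℕ) < a lst := (p.2 lst).isLt
          have hc2 : (p'.2 lst : ℕ) < a lst := (p'.2 lst).isLt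
          rw [hm2k] at hdm
          omega
      rw [hzero]
      exact Submodule.zero_mem _
    · refine Submodule.mem_iSup_of_mem ((Finsupp.weight w) β)
        (Submodule.mem_iSup_of_mem hq ?_)
      exact ⟨monomial β 1, isWeightedHomogeneous_monomial w β 1 rfl, rfl⟩
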